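/- Let D be n disks with collinear centers sorted by x-coordinate as d_1, ..., d_n. In any proper assignment φ of a prefix {d_1, ..., d_x}, if d_y is the right-most selected disk then all disks d_{y+1}, ..., d_x are merged with d_y. -/

import Mathlib

open scoped Classical

noncomputable section

abbrev Pt := EuclideanSpace ℝ (Fin 2)

/-- The aggregate radius of a disk `i` under an assignment `φ`:
`r_i(φ) = Σ_{j : φ j = i} r j`. -/
def aggRadius {n : ℕ} (r : Fin n → ℝ) (φ : Fin n → Fin n) (i : Fin n) : ℝ :=
  ∑ j ∈ Finset.univ.filter (fun j => φ j = i), r j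

/-- A *proper assignment* for disks with centres `p` and radii `r`:
(0) `φ` is an assignment (`φ ∘ φ = φ`);
(1) disks merged with a selected disk `i` form a prefix of the other disks ordered by
    distance from `p i`: any disk strictly closer to `i` than a merged disk is merged;
(2) a merged disk's centre lies strictly within the merging disk after all strictly
    closer disks are merged: `dist (p j) (p i) < r i + Σ_{k closer than j} r k`;
(3) selected disks are pairwise centre-disjoint with respect to aggregate radii:
    `r_i(φ) + r_j(φ) ≤ dist (p i) (p j)`. -/
def IsProper {n : ℕ} (p : Fin n → Pt) (r : Fin n → ℝ) (φ : Fin n → Fin n) : Prop :=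
  (∀ d, φ (φ d) = φ d) ∧
  (∀ i j k, φ j = i → j ≠ i → k ≠ i →
    dist (p k) (p i) < dist (p j) (p i) → φ k = i) ∧
  (∀ i j, φ j = i → j ≠ i →
    dist (p j) (p i) < r i + ∑ k ∈ Finset.univ.filter
      (fun k => k ≠ i ∧ k ≠ j ∧ dist (p k) (p i) < dist (p j) (p i)), r k) ∧
  (∀ i j, φ i = i → φ j = j → i ≠ j →
    aggRadius r φ i + aggRadius r φ j ≤ dist (p i) (p j))

/-- Collinear centres: let the disks `d_0, …, d_{n−1}` have centres on the x-axis,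
sorted by strictly increasing x-coordinate.  In any proper assignment `φ`, if `d_y`
is the right-most selected disk, then every disk to the right of `d_y` is merged
with `d_y`. -/
theorem collinear_rightmost_merge {n : ℕ} (xc : Fin n → ℝ) (hx : StrictMono xc)
    (r : Fin n → ℝ) (hr : ∀ i, 0 < r i)
    (φ : Fin n → Fin n)
    (hφ : IsProper (fun i => WithLp.toLp 2 ![xc i, 0]) r φ)
    (y : Fin n) (hy : φ y = y)
    (hrm : ∀ j, y < j → φ j ≠ j) :
    ∀ j, y < j → φ j = y := by
  have hdist : ∀ a b : Fin n, dist (α := Pt) (WithLp.toLp 2 ![xc a, 0]) (WithLp.toLp 2 ![xc b, 0]) = |xc a - xc b| := by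
    intro a b
    rw [EuclideanSpace.dist_eq]
    simp [Fin.sum_univ_two, Real.dist_eq, sq_abs,
      Real.sqrt_sq_eq_abs]
  intro j hj
  by_contra hjy
  set w := φ j with hwdef
  have hw : φ w = w := hφ.1 j
  have hwy : w ≠ y := hjy
  have hwlt : w < y := by
    rcases lt_trichotomy w y with h | h | h
    · exact h
    · exact absurd h hwy
    · exact absurd hw (hrm w h)
  have hjw : j ≠ w := by
    intro h
    exact hrm j hj (h ▸ hwdef.symm)
  have hdlt : dist (α := Pt) (WithLp.toLp 2 ![xc y, 0]) (WithLp.toLp 2 ![xc w, 0])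
      < dist (α := Pt) (WithLp.toLp 2 ![xc j, 0]) (WithLp.toLp 2 ![xc w, 0]) := by
    rw [hdist, hdist]
    have h1 : xc w < xc y := hx hwlt
    have h2 : xc y < xc j := hx hj
    rw [abs_of_pos (by linarith), abs_of_pos (by linarith)]
    linarith
  have := hφ.2.1 w j y hwdef.symm hjw (Fin.ne_of_gt hwlt) hdlt
  rw [hy] at this
  exact hwy this.symm

end
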